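/- If r ≥ 2 and 2 ≤ d₁ ≤ min{d₂, …, d_r}, then gpack(P_{d₁} ⊠ P_{d₂} ⊠ ⋯ ⊠ P_{d_r}) = d₂ · d₃ ⋯ d_r. -/

import Mathlib

open SimpleGraph

/-- A geodesic (shortest path) in `G`: a path whose length equals the distance
between its endpoints. -/
def IsGeodesic {V : Type*} (G : SimpleGraph V) {u v : V} (p : G.Walk u v) : Prop :=
  p.IsPath ∧ p.length = G.dist u v

/-- A maximal geodesic: a geodesic that is not contained as a subpath of any longer
geodesic, equivalently it cannot be extended at either end to a longer geodesic. -/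
def IsMaxGeodesic {V : Type*} (G : SimpleGraph V) {u v : V} (p : G.Walk u v) : Prop :=
  IsGeodesic G p ∧
  (∀ w (h : G.Adj w u), ¬ IsGeodesic G (SimpleGraph.Walk.cons h p)) ∧
  (∀ w (h : G.Adj v w), ¬ IsGeodesic G (p.concat h))

/-- A set of vertices that is the vertex set of some maximal geodesic of `G`. -/
def IsMaxGeodesicSet {V : Type*} (G : SimpleGraph V) (s : Set V) : Prop :=
  ∃ (u v : V) (p : G.Walk u v), IsMaxGeodesic G p ∧ s = {x | x ∈ p.support}

/-- A geodesic packing: a family of pairwise vertex-disjoint maximal geodesics. -/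
def IsGeodesicPacking {V : Type*} (G : SimpleGraph V) (P : Set (Set V)) : Prop :=
  (∀ s ∈ P, IsMaxGeodesicSet G s) ∧ P.Pairwise Disjoint

/-- The geodesic packing number `gpack(G)`. -/
noncomputable def gpackNum {V : Type*} (G : SimpleGraph V) : ℕ :=
  sSup {k | ∃ P : Finset (Set V), IsGeodesicPacking G ↑P ∧ P.card = k}

/-- A geodesic transversal: a vertex set hitting every maximal geodesic. -/
def IsGeodesicTransversal {V : Type*} (G : SimpleGraph V) (S : Set V) : Prop :=
  ∀ s, IsMaxGeodesicSet G s → (S ∩ s).Nonempty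

/-- The geodesic transversal number `gt(G)`. -/
noncomputable def gtransNum {V : Type*} (G : SimpleGraph V) : ℕ :=
  sInf {k | ∃ S : Finset V, IsGeodesicTransversal G ↑S ∧ S.card = k}

/-- The strong product of paths `P_{d 0} ⊠ ⋯ ⊠ P_{d (r-1)}` (a diagonal grid):
vertices are tuples, and distinct tuples are adjacent iff their coordinates differ
by at most `1` everywhere. -/
def strongGrid {r : ℕ} (d : Fin r → ℕ) : SimpleGraph (∀ i, Fin (d i)) where
  Adj x y := x ≠ y ∧ ∀ i, (x i : ℕ) ≤ (y i : ℕ) + 1 ∧ (y i : ℕ) ≤ (x i : ℕ) + 1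
  symm := ⟨by
    rintro x y ⟨hne, h⟩
    exact ⟨hne.symm, fun i => ⟨(h i).2, (h i).1⟩⟩⟩
  loopless := ⟨fun x h => h.1 rfl⟩


namespace GpackAux


variable {r : ℕ} {d : Fin r → ℕ}

lemma adj_iff {x y : ∀ i, Fin (d i)} : (strongGrid d).Adj x y ↔
    x ≠ y ∧ ∀ i, (x i : ℕ) ≤ (y i : ℕ) + 1 ∧ (y i : ℕ) ≤ (x i : ℕ) + 1 := Iff.rfl

/-- Chebyshev distance on the grid. -/
def cdist (x y : ∀ i, Fin (d i)) : ℕ :=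
  Finset.univ.sup fun i => max ((x i : ℕ) - (y i : ℕ)) ((y i : ℕ) - (x i : ℕ))

lemma cdist_le_iff {x y : ∀ i, Fin (d i)} {n : ℕ} :
    cdist x y ≤ n ↔ ∀ i, (x i : ℕ) - (y i : ℕ) ≤ n ∧ (y i : ℕ) - (x i : ℕ) ≤ n := by
  simp [cdist, Finset.sup_le_iff, max_le_iff]

lemma le_cdist (i : Fin r) {x y : ∀ i, Fin (d i)} :
    max ((x i : ℕ) - (y i : ℕ)) ((y i : ℕ) - (x i : ℕ)) ≤ cdist x y :=
  Finset.le_sup (f := fun i => max ((x i : ℕ) - (y i : ℕ)) ((y i : ℕ) - (x i : ℕ)))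
    (Finset.mem_univ i)

lemma cdist_self (x : ∀ i, Fin (d i)) : cdist x x = 0 := by
  simp [cdist]

lemma eq_of_cdist_eq_zero {x y : ∀ i, Fin (d i)} (h : cdist x y = 0) : x = y := by
  funext i
  have := (cdist_le_iff.1 h.le) i
  exact Fin.ext (by omega)

lemma cdist_triangle (x y z : ∀ i, Fin (d i)) : cdist x z ≤ cdist x y + cdist y z := by
  rw [cdist_le_iff]
  intro i
  have h1 := le_cdist (x := x) (y := y) i
  have h2 := le_cdist (x := y) (y := z) i
  simp only [max_le_iff] at h1 h2
  omega

lemma adj_cdist {x y : ∀ i, Fin (d i)} (h : (strongGrid d).Adj x y) : cdist x y ≤ 1 := by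
  rw [cdist_le_iff]
  intro i
  have := (adj_iff.1 h).2 i
  omega

lemma cdist_le_length {x y : ∀ i, Fin (d i)} (p : (strongGrid d).Walk x y) :
    cdist x y ≤ p.length := by
  induction p with
  | nil => simp [cdist_self]
  | @cons a b c h q ih =>
    calc cdist a c ≤ cdist a b + cdist b c := cdist_triangle _ _ _
    _ ≤ 1 + q.length := add_le_add (adj_cdist h) ih
    _ = (SimpleGraph.Walk.cons h q).length := by simp [SimpleGraph.Walk.length_cons]; omega

/-- one step toward `y` -/
def step (x y : ∀ i, Fin (d i)) : ∀ i, Fin (d i) := fun i =>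
  if h : (x i : ℕ) < (y i : ℕ) then ⟨(x i : ℕ) + 1, lt_of_le_of_lt h (y i).isLt⟩
  else if (y i : ℕ) < (x i : ℕ) then ⟨(x i : ℕ) - 1, lt_of_le_of_lt (Nat.sub_le _ _) (x i).isLt⟩
  else x i

lemma step_spec (x y : ∀ i, Fin (d i)) (i : Fin r) :
    ((x i : ℕ) < (y i : ℕ) ∧ (step x y i : ℕ) = (x i : ℕ) + 1) ∨
    ((y i : ℕ) < (x i : ℕ) ∧ (step x y i : ℕ) = (x i : ℕ) - 1) ∨
    ((x i : ℕ) = (y i : ℕ) ∧ (step x y i : ℕ) = (x i : ℕ)) := by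
  unfold step
  split_ifs with h1 h2
  · exact Or.inl ⟨h1, rfl⟩
  · exact Or.inr (Or.inl ⟨h2, rfl⟩)
  · exact Or.inr (Or.inr ⟨by omega, rfl⟩)

lemma adj_step {x y : ∀ i, Fin (d i)} (h : x ≠ y) : (strongGrid d).Adj x (step x y) := by
  rw [adj_iff]
  constructor
  · intro hx
    apply h
    funext i
    have hs := step_spec x y i
    have hxi : (x i : ℕ) = (step x y i : ℕ) := congrArg Fin.val (congrFun hx i)
    refine Fin.ext ?_
    rcases hs with ⟨h1, h2⟩ | ⟨h1, h2⟩ | ⟨h1, h2⟩ <;> omega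
  · intro i
    have hs := step_spec x y i
    rcases hs with ⟨h1, h2⟩ | ⟨h1, h2⟩ | ⟨h1, h2⟩ <;> omega

lemma cdist_step_le {x y : ∀ i, Fin (d i)} : cdist (step x y) y ≤ cdist x y - 1 := by
  rw [cdist_le_iff]
  intro i
  have hs := step_spec x y i
  have hle := le_cdist (x := x) (y := y) i
  simp only [max_le_iff] at hle
  rcases hs with ⟨h1, h2⟩ | ⟨h1, h2⟩ | ⟨h1, h2⟩ <;>
    · have := hle.1; have := hle.2; omega

lemma exists_walk : ∀ (n : ℕ) (x y : ∀ i, Fin (d i)), cdist x y ≤ n →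
    ∃ p : (strongGrid d).Walk x y, p.length ≤ n := by
  intro n
  induction n with
  | zero =>
    intro x y h
    obtain rfl := eq_of_cdist_eq_zero (Nat.le_zero.1 h)
    exact ⟨.nil, by simp⟩
  | succ n ih =>
    intro x y h
    by_cases hxy : x = y
    · subst hxy; exact ⟨.nil, by simp⟩
    · obtain ⟨p, hp⟩ := ih (step x y) y (le_trans cdist_step_le (by omega))
      exact ⟨.cons (adj_step hxy) p, by simpa [SimpleGraph.Walk.length_cons] using hp⟩

lemma dist_eq (x y : ∀ i, Fin (d i)) : (strongGrid d).dist x y = cdist x y := by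
  obtain ⟨p, hp⟩ := exists_walk (cdist x y) x y le_rfl
  refine le_antisymm (le_trans (SimpleGraph.dist_le p) hp) ?_
  obtain ⟨q, hq⟩ := (Reachable.exists_walk_length_eq_dist ⟨p⟩)
  exact hq ▸ cdist_le_length q


lemma line_walk (j : Fin r) : ∀ (k : ℕ) (x y : ∀ i, Fin (d i)),
    (∀ i, i ≠ j → x i = y i) → (x j : ℕ) + k = (y j : ℕ) →
    ∃ p : (strongGrid d).Walk x y, p.IsPath ∧ p.length = k ∧
      (∀ z, z ∈ p.support ↔ (∀ i, i ≠ j → z i = x i) ∧ (x j : ℕ) ≤ (z j : ℕ) ∧ (z j : ℕ) ≤ (y j : ℕ)) := by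
  intro k
  induction k with
  | zero =>
    intro x y hoff hj
    have hxy : x = y := by
      funext i
      by_cases h : i = j
      · subst h; exact Fin.ext (by omega)
      · exact hoff i h
    subst hxy
    refine ⟨.nil, by simp, by simp, fun z => ?_⟩
    simp only [SimpleGraph.Walk.support_nil, List.mem_singleton]
    constructor
    · rintro rfl
      exact ⟨fun i _ => rfl, le_refl _, by omega⟩
    · rintro ⟨hz, hz1, hz2⟩
      funext i
      by_cases h : i = j
      · subst h; exact Fin.ext (by omega)
      · exact hz i h
  | succ k ih =>
    intro x y hoff hj
    have hjx : (x j : ℕ) + 1 < d j := lt_of_le_of_lt (by omega) (y j).isLt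
    set x' : ∀ i, Fin (d i) := Function.update x j ⟨(x j : ℕ) + 1, hjx⟩ with hx'def
    have hx'j : (x' j : ℕ) = (x j : ℕ) + 1 := by simp [hx'def]
    have hx'off : ∀ i, i ≠ j → x' i = x i := fun i hi => Function.update_of_ne hi _ _
    have hadj : (strongGrid d).Adj x x' := by
      refine adj_iff.2 ⟨fun he => by have := congrArg Fin.val (congrFun he j); omega, fun i => ?_⟩
      by_cases hi : i = j
      · subst hi; omega
      · rw [hx'off i hi]; omega
    obtain ⟨p', hpath, hlen, hsupp⟩ := ih x' y (fun i hi => (hx'off i hi).trans (hoff i hi))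
      (by omega)
    refine ⟨.cons hadj p', ?_, by simp [hlen], fun z => ?_⟩
    · refine (SimpleGraph.Walk.cons_isPath_iff _ _).2 ⟨hpath, fun hmem => ?_⟩
      have := ((hsupp x).1 hmem).2.1
      omega
    · simp only [SimpleGraph.Walk.support_cons, List.mem_cons]
      constructor
      · rintro (rfl | hmem)
        · exact ⟨fun i _ => rfl, le_refl _, by omega⟩
        · obtain ⟨hz, hz1, hz2⟩ := (hsupp z).1 hmem
          exact ⟨fun i hi => (hz i hi).trans (hx'off i hi), by omega, hz2⟩
      · rintro ⟨hz, hz1, hz2⟩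
        rcases eq_or_lt_of_le hz1 with heq | hlt
        · left
          funext i
          by_cases h : i = j
          · subst h; exact Fin.ext (by omega)
          · exact hz i h
        · right
          exact (hsupp z).2 ⟨fun i hi => (hz i hi).trans (hx'off i hi).symm, by omega, hz2⟩

end GpackAux

namespace GpackAux

variable {r : ℕ} {d : Fin (r + 2) → ℕ}

lemma geo_cons_ext {u v w : ∀ i, Fin (d i)} (p : (strongGrid d).Walk u v)
    (hp : IsGeodesic (strongGrid d) p) (hw : (strongGrid d).Adj w u)
    (hc : cdist w v = p.length + 1) : IsGeodesic (strongGrid d) (SimpleGraph.Walk.cons hw p) := by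
  refine ⟨(SimpleGraph.Walk.cons_isPath_iff _ _).2 ⟨hp.1, fun hmem => ?_⟩, ?_⟩
  · have h1 : cdist w v ≤ (p.dropUntil w hmem).length := cdist_le_length _
    have h2 := SimpleGraph.Walk.length_dropUntil_le p hmem
    omega
  · rw [SimpleGraph.Walk.length_cons, dist_eq, hc]

lemma geo_concat_ext {u v w : ∀ i, Fin (d i)} (p : (strongGrid d).Walk u v)
    (hp : IsGeodesic (strongGrid d) p) (hw : (strongGrid d).Adj v w)
    (hc : cdist u w = p.length + 1) : IsGeodesic (strongGrid d) (p.concat hw) := by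
  constructor
  · rw [← SimpleGraph.Walk.isPath_reverse_iff, SimpleGraph.Walk.reverse_concat]
    refine (SimpleGraph.Walk.cons_isPath_iff _ _).2 ⟨(SimpleGraph.Walk.isPath_reverse_iff _).2 hp.1,
      fun hmem => ?_⟩
    rw [SimpleGraph.Walk.support_reverse, List.mem_reverse] at hmem
    have h1 : cdist u w ≤ (p.takeUntil w hmem).length := cdist_le_length _
    have h2 := SimpleGraph.Walk.length_takeUntil_le p hmem
    omega
  · rw [SimpleGraph.Walk.length_concat, dist_eq, hc]

lemma max_geo_long (h1 : 2 ≤ d 0) (hmin : ∀ i, d 0 ≤ d i) {u v : ∀ i, Fin (d i)}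
    (p : (strongGrid d).Walk u v) (hp : IsMaxGeodesic (strongGrid d) p) :
    d 0 ≤ p.length + 1 := by
  by_contra hshort
  push_neg at hshort
  set L := p.length with hLdef
  have hL : cdist u v = L := by
    have := hp.1.2
    rw [dist_eq] at this
    omega
  have hlt : ∀ i, L + 1 < d i := fun i => lt_of_lt_of_le (by omega) (hmin i)
  obtain ⟨i₀, -, hi₀⟩ := Finset.exists_mem_eq_sup (Finset.univ : Finset (Fin (r + 2)))
    ⟨0, Finset.mem_univ 0⟩ (fun i => max ((u i : ℕ) - (v i : ℕ)) ((v i : ℕ) - (u i : ℕ)))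
  rw [show (Finset.univ.sup fun i => max ((u i : ℕ) - (v i : ℕ)) ((v i : ℕ) - (u i : ℕ))) =
    cdist u v from rfl, hL] at hi₀
  have hall : ∀ i, (u i : ℕ) - (v i : ℕ) ≤ L ∧ (v i : ℕ) - (u i : ℕ) ≤ L :=
    cdist_le_iff.1 hL.le
  rcases le_or_gt (v i₀ : ℕ) (u i₀ : ℕ) with hcase | hcase
  · -- u i₀ - v i₀ = L
    have hdiff : (u i₀ : ℕ) - (v i₀ : ℕ) = L := by omega
    rcases lt_or_ge ((u i₀ : ℕ) + 1) (d i₀) with hroom | hroom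
    · -- extend at u
      set w : ∀ i, Fin (d i) := Function.update u i₀ ⟨(u i₀ : ℕ) + 1, hroom⟩ with hwdef
      have hwi₀ : (w i₀ : ℕ) = (u i₀ : ℕ) + 1 := by simp [hwdef]
      have hwoff : ∀ i, i ≠ i₀ → w i = u i := fun i hi => Function.update_of_ne hi _ _
      have hadj : (strongGrid d).Adj w u := by
        refine adj_iff.2 ⟨fun he => by have := congrArg Fin.val (congrFun he i₀); omega, fun i => ?_⟩
        by_cases hi : i = i₀
        · subst hi; omega
        · rw [hwoff i hi]; omega
      have hcd : cdist w v = L + 1 := by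
        refine le_antisymm (cdist_le_iff.2 fun i => ?_) ?_
        · by_cases hi : i = i₀
          · subst hi; have := hall i; omega
          · rw [hwoff i hi]; have := hall i; omega
        · have := le_cdist (x := w) (y := v) i₀
          simp only [max_le_iff] at this ⊢
          omega
      exact hp.2.1 w hadj (geo_cons_ext p hp.1 hadj hcd)
    · -- u i₀ = d i₀ - 1, extend at v downward
      have hv1 : 1 ≤ (v i₀ : ℕ) := by
        have := (u i₀).isLt; have := hlt i₀; omega
      set w : ∀ i, Fin (d i) := Function.update v i₀ ⟨(v i₀ : ℕ) - 1,
        lt_of_le_of_lt (Nat.sub_le _ _) (v i₀).isLt⟩ with hwdef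
      have hwi₀ : (w i₀ : ℕ) = (v i₀ : ℕ) - 1 := by simp [hwdef]
      have hwoff : ∀ i, i ≠ i₀ → w i = v i := fun i hi => Function.update_of_ne hi _ _
      have hadj : (strongGrid d).Adj v w := by
        refine adj_iff.2 ⟨fun he => by have := congrArg Fin.val (congrFun he i₀); omega, fun i => ?_⟩
        by_cases hi : i = i₀
        · subst hi; omega
        · rw [hwoff i hi]; omega
      have hcd : cdist u w = L + 1 := by
        refine le_antisymm (cdist_le_iff.2 fun i => ?_) ?_
        · by_cases hi : i = i₀
          · subst hi; have := hall i; omega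
          · rw [hwoff i hi]; have := hall i; omega
        · have := le_cdist (x := u) (y := w) i₀
          simp only [max_le_iff] at this ⊢
          omega
      exact hp.2.2 w hadj (geo_concat_ext p hp.1 hadj hcd)
  · -- v i₀ - u i₀ = L
    have hdiff : (v i₀ : ℕ) - (u i₀ : ℕ) = L := by omega
    rcases lt_or_ge ((v i₀ : ℕ) + 1) (d i₀) with hroom | hroom
    · -- extend at v upward
      set w : ∀ i, Fin (d i) := Function.update v i₀ ⟨(v i₀ : ℕ) + 1, hroom⟩ with hwdef
      have hwi₀ : (w i₀ : ℕ) = (v i₀ : ℕ) + 1 := by simp [hwdef]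
      have hwoff : ∀ i, i ≠ i₀ → w i = v i := fun i hi => Function.update_of_ne hi _ _
      have hadj : (strongGrid d).Adj v w := by
        refine adj_iff.2 ⟨fun he => by have := congrArg Fin.val (congrFun he i₀); omega, fun i => ?_⟩
        by_cases hi : i = i₀
        · subst hi; omega
        · rw [hwoff i hi]; omega
      have hcd : cdist u w = L + 1 := by
        refine le_antisymm (cdist_le_iff.2 fun i => ?_) ?_
        · by_cases hi : i = i₀
          · subst hi; have := hall i; omega
          · rw [hwoff i hi]; have := hall i; omega
        · have := le_cdist (x := u) (y := w) i₀
          simp only [max_le_iff] at this ⊢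
          omega
      exact hp.2.2 w hadj (geo_concat_ext p hp.1 hadj hcd)
    · -- v i₀ = d i₀ - 1, extend at u downward
      have hu1 : 1 ≤ (u i₀ : ℕ) := by
        have := (v i₀).isLt; have := hlt i₀; omega
      set w : ∀ i, Fin (d i) := Function.update u i₀ ⟨(u i₀ : ℕ) - 1,
        lt_of_le_of_lt (Nat.sub_le _ _) (u i₀).isLt⟩ with hwdef
      have hwi₀ : (w i₀ : ℕ) = (u i₀ : ℕ) - 1 := by simp [hwdef]
      have hwoff : ∀ i, i ≠ i₀ → w i = u i := fun i hi => Function.update_of_ne hi _ _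
      have hadj : (strongGrid d).Adj w u := by
        refine adj_iff.2 ⟨fun he => by have := congrArg Fin.val (congrFun he i₀); omega, fun i => ?_⟩
        by_cases hi : i = i₀
        · subst hi; omega
        · rw [hwoff i hi]; omega
      have hcd : cdist w v = L + 1 := by
        refine le_antisymm (cdist_le_iff.2 fun i => ?_) ?_
        · by_cases hi : i = i₀
          · subst hi; have := hall i; omega
          · rw [hwoff i hi]; have := hall i; omega
        · have := le_cdist (x := w) (y := v) i₀
          simp only [max_le_iff] at this ⊢
          omega
      exact hp.2.1 w hadj (geo_cons_ext p hp.1 hadj hcd)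


end GpackAux

theorem gpack_strongGrid (r : ℕ) (d : Fin (r + 2) → ℕ) (h1 : 2 ≤ d 0)
    (hmin : ∀ i, d 0 ≤ d i) :
    gpackNum (strongGrid d) = ∏ i ∈ Finset.univ.erase (0 : Fin (r + 2)), d i := by
  classical
  have hdpos : ∀ i, 0 < d i := fun i => lt_of_lt_of_le (by omega) (hmin i)
  set N := ∏ i ∈ Finset.univ.erase (0 : Fin (r + 2)), d i with hNdef
  have hprod : ∏ i, d i = d 0 * N :=
    (Finset.mul_prod_erase Finset.univ d (Finset.mem_univ 0)).symm
  set S : Set ℕ := {k | ∃ P : Finset (Set (∀ i, Fin (d i))),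
    IsGeodesicPacking (strongGrid d) ↑P ∧ P.card = k} with hSdef
  -- upper bound
  have hub : ∀ k ∈ S, k ≤ N := by
    rintro k ⟨P, ⟨hPmem, hPdisj⟩, rfl⟩
    set F : Set (∀ i, Fin (d i)) → Finset (∀ i, Fin (d i)) :=
      fun s => Finset.univ.filter (· ∈ s) with hFdef
    have hFcard : ∀ s ∈ P, d 0 ≤ (F s).card := by
      intro s hs
      obtain ⟨u, v, p, hp, rfl⟩ := hPmem s hs
      have hFs : F {x | x ∈ p.support} = p.support.toFinset := by
        ext z; simp [hFdef]
      rw [hFs, List.toFinset_card_of_nodup hp.1.1.support_nodup,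
        SimpleGraph.Walk.length_support]
      exact GpackAux.max_geo_long h1 hmin p hp
    have hdisjF : ∀ s ∈ P, ∀ t ∈ P, s ≠ t → Disjoint (F s) (F t) := by
      intro s hs t ht hst
      have := hPdisj (Finset.mem_coe.2 hs) (Finset.mem_coe.2 ht) hst
      rw [Finset.disjoint_left]
      intro a ha hat
      simp only [hFdef, Finset.mem_filter] at ha hat
      exact Set.disjoint_left.1 this ha.2 hat.2
    have hsum : P.card * d 0 ≤ ∑ s ∈ P, (F s).card := by
      have := Finset.card_nsmul_le_sum P (fun s => (F s).card) (d 0) hFcard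
      simpa [smul_eq_mul] using this
    have hcup : ∑ s ∈ P, (F s).card = (P.biUnion F).card := (Finset.card_biUnion hdisjF).symm
    have hle : (P.biUnion F).card ≤ Fintype.card (∀ i, Fin (d i)) := Finset.card_le_univ _
    have hcardV : Fintype.card (∀ i, Fin (d i)) = d 0 * N := by
      rw [Fintype.card_pi]
      simp only [Fintype.card_fin]
      exact hprod
    have h' : d 0 * P.card ≤ d 0 * N := by rw [mul_comm]; omega
    exact Nat.le_of_mul_le_mul_left h' (hdpos 0)
  -- lower bound: explicit packing
  have hmemN : N ∈ S := by
    set u0 : Fin (d 0) := ⟨0, hdpos 0⟩ with hu0def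
    set vtop : Fin (d 0) := ⟨d 0 - 1, by omega⟩ with hvtopdef
    set base : (∀ i : Fin (r + 1), Fin (d i.succ)) → (∀ i, Fin (d i)) :=
      fun b => Fin.cases u0 b with hbasedef
    have hbase0 : ∀ b, base b 0 = u0 := fun b => rfl
    have hbasesucc : ∀ b i, base b i.succ = b i := fun b i => by simp [hbasedef]
    set g : (∀ i : Fin (r + 1), Fin (d i.succ)) → Set (∀ i, Fin (d i)) :=
      fun b => {z | ∀ i : Fin (r + 1), z i.succ = b i} with hgdef
    have hself : ∀ b, base b ∈ g b := fun b i => hbasesucc b i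
    have hginj : Function.Injective g := by
      intro b b' hbb
      funext i
      have h1' : base b ∈ g b' := hbb ▸ hself b
      exact (hbasesucc b i).symm.trans (h1' i)
    -- the geodesic for each b
    have hline : ∀ b, IsMaxGeodesicSet (strongGrid d) (g b) := by
      intro b
      set u : ∀ i, Fin (d i) := base b with hudef
      set v : ∀ i, Fin (d i) := Function.update u 0 vtop with hvdef
      have hv0 : (v 0 : ℕ) = d 0 - 1 := by simp [hvdef, hvtopdef]
      have hu0 : (u 0 : ℕ) = 0 := rfl
      have hvoff : ∀ i, i ≠ 0 → v i = u i := fun i hi => Function.update_of_ne hi _ _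
      obtain ⟨p, hpath, hlen, hsupp⟩ := GpackAux.line_walk (d := d) 0 (d 0 - 1) u v
        (fun i hi => (hvoff i hi).symm) (by omega)
      have hcduv : GpackAux.cdist u v = d 0 - 1 := by
        refine le_antisymm (GpackAux.cdist_le_iff.2 fun i => ?_) ?_
        · by_cases hi : i = 0
          · subst hi; omega
          · rw [hvoff i hi]; omega
        · have := GpackAux.le_cdist (d := d) (x := u) (y := v) 0
          simp only [max_le_iff] at this
          omega
      refine ⟨u, v, p, ⟨⟨hpath, ?_⟩, ?_, ?_⟩, ?_⟩
      · rw [GpackAux.dist_eq, hcduv, hlen]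
      · intro w h hgeo
        have hlc : (SimpleGraph.Walk.cons h p).length = d 0 - 1 + 1 := by
          simp [hlen]
        have hd : (strongGrid d).dist w v ≤ d 0 - 1 := by
          rw [GpackAux.dist_eq]
          refine GpackAux.cdist_le_iff.2 fun i => ?_
          by_cases hi : i = 0
          · subst hi
            have := (w 0).isLt; have := (v 0).isLt
            omega
          · rw [hvoff i hi]
            have := (GpackAux.adj_iff.1 h).2 i
            omega
        have := hgeo.2
        omega
      · intro w h hgeo
        have hlc : (p.concat h).length = d 0 - 1 + 1 := by
          simp [SimpleGraph.Walk.length_concat, hlen]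
        have hd : (strongGrid d).dist u w ≤ d 0 - 1 := by
          rw [GpackAux.dist_eq]
          refine GpackAux.cdist_le_iff.2 fun i => ?_
          by_cases hi : i = 0
          · subst hi
            have := (w 0).isLt; have := (u 0).isLt
            omega
          · have hvi := hvoff i hi
            have := (GpackAux.adj_iff.1 h).2 i
            have : (v i : ℕ) = (u i : ℕ) := by rw [hvi]
            have := (GpackAux.adj_iff.1 h).2 i
            omega
        have := hgeo.2
        omega
      · ext z
        simp only [hgdef, Set.mem_setOf_eq]
        rw [hsupp z]
        constructor
        · intro hz
          refine ⟨fun i hi => ?_, by omega, by rw [hv0]; have := (z 0).isLt; omega⟩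
          have hj : ((i.pred hi).succ) = i := Fin.succ_pred i hi
          rw [← hj, hz (i.pred hi), ← hbasesucc b (i.pred hi)]
        · rintro ⟨hz, -, -⟩
          intro i
          rw [← hbasesucc b i]
          exact hz i.succ (Fin.succ_ne_zero i)
    -- assemble the packing
    refine ⟨Finset.univ.image g, ⟨?_, ?_⟩, ?_⟩
    · intro s hs
      simp only [Finset.coe_image, Finset.coe_univ, Set.image_univ, Set.mem_range] at hs
      obtain ⟨b, rfl⟩ := hs
      exact hline b
    · intro s hs t ht hst
      simp only [Finset.coe_image, Finset.coe_univ, Set.image_univ, Set.mem_range] at hs ht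
      obtain ⟨b, rfl⟩ := hs
      obtain ⟨b', rfl⟩ := ht
      rw [Set.disjoint_left]
      intro z hz hz'
      apply hst
      have : b = b' := funext fun i => (hz i).symm.trans (hz' i)
      rw [this]
    · rw [Finset.card_image_of_injective _ hginj, Finset.card_univ, Fintype.card_pi]
      simp only [Fintype.card_fin]
      have hsucc : ∏ i : Fin (r + 2), d i = d 0 * ∏ i : Fin (r + 1), d i.succ :=
        Fin.prod_univ_succ d
      rw [hprod] at hsucc
      exact (Nat.eq_of_mul_eq_mul_left (hdpos 0) hsucc.symm)
  exact le_antisymm (csSup_le ⟨N, hmemN⟩ hub) (le_csSup ⟨N, hub⟩ hmemN)
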